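/- Let n ≥ 1 and let (A_1, …, A_{2n}) be a Clifford system on ℝ^m. Then for all x ∈ ℝ^m: ‖∇q(x)‖² = 16 ‖x‖² q(x), where q(x) = Σ_{i=1}^{2n} ⟨x,A_ix⟩². -/

import Mathlib

open RealInnerProductSpace

/-- The quadratic form `P(x) = ⟨x, A x⟩` associated to an `m × m` real matrix `A`. -/
noncomputable def quadForm {m : ℕ} (A : Matrix (Fin m) (Fin m) ℝ)
    (x : EuclideanSpace ℝ (Fin m)) : ℝ :=
  ⟪x, Matrix.toEuclideanLin A x⟫

/-- A Clifford system on `ℝ^m`. -/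
def IsCliffordSystem {m N : ℕ} (A : Fin N → Matrix (Fin m) (Fin m) ℝ) : Prop :=
  (∀ i, (A i).IsSymm) ∧
    ∀ i j, A i * A j + A j * A i
      = (if i = j then (2 : ℝ) else 0) • (1 : Matrix (Fin m) (Fin m) ℝ)

/-- For a Clifford system `(A_1, …, A_{2n})` on `ℝ^m`, the degree-4 polynomial
`u(x) = Σ_{i=1}^n ⟨x, A_i x⟩² − Σ_{i=1}^n ⟨x, A_{n+i} x⟩²`. -/
noncomputable def cliffU {m n : ℕ} (A : Fin (n + n) → Matrix (Fin m) (Fin m) ℝ)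
    (x : EuclideanSpace ℝ (Fin m)) : ℝ :=
  ∑ i : Fin n, (quadForm (A (Fin.castAdd n i)) x) ^ 2
    - ∑ i : Fin n, (quadForm (A (Fin.natAdd n i)) x) ^ 2

/-- For a Clifford system `(A_1, …, A_{2n})` on `ℝ^m`, the degree-4 polynomial
`q(x) = Σ_{i=1}^{2n} ⟨x, A_i x⟩² = ‖P(x)‖²`. -/
noncomputable def cliffQ {m n : ℕ} (A : Fin (n + n) → Matrix (Fin m) (Fin m) ℝ)
    (x : EuclideanSpace ℝ (Fin m)) : ℝ :=
  ∑ i : Fin (n + n), (quadForm (A i) x) ^ 2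

open Matrix in
-- symmetry lemma
lemma symm_inner {m : ℕ} {B : Matrix (Fin m) (Fin m) ℝ} (hB : B.IsSymm)
    (v w : EuclideanSpace ℝ (Fin m)) :
    ⟪v, Matrix.toEuclideanLin B w⟫ = ⟪Matrix.toEuclideanLin B v, w⟫ := by
  have hH : Bᴴ = B := by
    ext i j
    simpa [Matrix.conjTranspose_apply] using hB.apply i j
  have := Matrix.toEuclideanLin_conjTranspose_eq_adjoint B
  rw [hH] at this
  rw [show Matrix.toEuclideanLin B v
      = LinearMap.adjoint (Matrix.toEuclideanLin B) v by rw [← this]]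
  exact (LinearMap.adjoint_inner_left _ _ _).symm

-- gradient of quadForm
lemma hasFDerivAt_quadForm {m : ℕ} (B : Matrix (Fin m) (Fin m) ℝ)
    (x : EuclideanSpace ℝ (Fin m)) :
    HasFDerivAt (quadForm B)
      ((fderivInnerCLM ℝ (x, Matrix.toEuclideanLin B x)).comp
        ((ContinuousLinearMap.id ℝ _).prod
          (LinearMap.toContinuousLinearMap (Matrix.toEuclideanLin B)))) x := by
  have h := (hasFDerivAt_id x).inner ℝ
    (LinearMap.toContinuousLinearMap (Matrix.toEuclideanLin B)).hasFDerivAt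
  exact h


lemma hasGradientAt_cliffQ {m n : ℕ}
    (A : Fin (n + n) → Matrix (Fin m) (Fin m) ℝ) (hA : ∀ i, (A i).IsSymm)
    (x : EuclideanSpace ℝ (Fin m)) :
    HasGradientAt (cliffQ A)
      (∑ i : Fin (n + n),
        (4 * quadForm (A i) x) • Matrix.toEuclideanLin (A i) x) x := by
  set D := fun i : Fin (n + n) =>
    (fderivInnerCLM ℝ (x, Matrix.toEuclideanLin (A i) x)).comp
      ((ContinuousLinearMap.id ℝ _).prod
        (LinearMap.toContinuousLinearMap (Matrix.toEuclideanLin (A i)))) with hD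
  have hfd : HasFDerivAt (cliffQ A)
      (∑ i : Fin (n + n), (2 * quadForm (A i) x) • D i) x := by
    have h : ∀ i ∈ Finset.univ, HasFDerivAt (fun y => quadForm (A i) y ^ 2)
        ((2 * quadForm (A i) x) • D i) x := by
      intro i _
      have := (hasFDerivAt_quadForm (A i) x).mul (hasFDerivAt_quadForm (A i) x)
      have h2 : (fun y => quadForm (A i) y * quadForm (A i) y)
          = fun y => quadForm (A i) y ^ 2 := by ext y; ring
      rw [← h2]
      have heq : (2 * quadForm (A i) x) • D i
          = quadForm (A i) x • D i + quadForm (A i) x • D i := by module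
      rw [heq, hD]
      exact this
    exact HasFDerivAt.fun_sum h
  have := hasFDerivAt_iff_hasGradientAt.mp hfd
  have key : InnerProductSpace.toDual ℝ (EuclideanSpace ℝ (Fin m))
      (∑ i : Fin (n + n), (4 * quadForm (A i) x) • Matrix.toEuclideanLin (A i) x)
      = ∑ i : Fin (n + n), (2 * quadForm (A i) x) • D i := by
    ext v
    simp only [hD, InnerProductSpace.toDual_apply_apply, ContinuousLinearMap.coe_sum',
      Finset.sum_apply, sum_inner, real_inner_smul_left, ContinuousLinearMap.coe_smul',
      Pi.smul_apply, ContinuousLinearMap.coe_comp', Function.comp_apply,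
      fderivInnerCLM_apply, ContinuousLinearMap.prod_apply,
      ContinuousLinearMap.coe_id', id_eq, LinearMap.coe_toContinuousLinearMap',
      smul_eq_mul]
    refine Finset.sum_congr rfl fun i _ => ?_
    rw [symm_inner (hA i) x v, real_inner_comm v (Matrix.toEuclideanLin (A i) x)]
    ring
  rw [← key, LinearIsometryEquiv.symm_apply_apply] at this
  exact this



theorem grad_q_sq {m n : ℕ} (hn : 1 ≤ n)
    (A : Fin (n + n) → Matrix (Fin m) (Fin m) ℝ) (hA : IsCliffordSystem A) :
    ∀ x : EuclideanSpace ℝ (Fin m),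
      ‖gradient (cliffQ A) x‖ ^ 2 = 16 * ‖x‖ ^ 2 * cliffQ A x := by
  intro x
  set c := fun i : Fin (n + n) => 4 * quadForm (A i) x with hc
  set g := ∑ i : Fin (n + n), c i • Matrix.toEuclideanLin (A i) x with hg
  have hgrad : gradient (cliffQ A) x = g :=
    (hasGradientAt_cliffQ A hA.1 x).gradient
  have hmul : ∀ i j : Fin (n + n),
      ⟪Matrix.toEuclideanLin (A i) x, Matrix.toEuclideanLin (A j) x⟫
        = ⟪x, Matrix.toEuclideanLin (A i * A j) x⟫ := by
    intro i j
    rw [← symm_inner (hA.1 i) x]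
    congr 1
    simp [Matrix.toEuclideanLin_apply, Matrix.mulVec_mulVec]
  have hpair : ∀ i j : Fin (n + n),
      ⟪x, Matrix.toEuclideanLin (A i * A j) x⟫
        + ⟪x, Matrix.toEuclideanLin (A j * A i) x⟫
        = (if i = j then (2:ℝ) else 0) * ‖x‖ ^ 2 := by
    intro i j
    rw [← inner_add_right, ← LinearMap.add_apply, ← map_add, hA.2 i j, _root_.map_smul,
      LinearMap.smul_apply]
    have h1 : Matrix.toEuclideanLin (1 : Matrix (Fin m) (Fin m) ℝ) x = x := by
      simp [Matrix.toEuclideanLin_apply]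
    rw [h1, real_inner_smul_right, real_inner_self_eq_norm_sq]
  have expand : ‖g‖ ^ 2
      = ∑ i : Fin (n + n), ∑ j : Fin (n + n),
          c i * c j * ⟪x, Matrix.toEuclideanLin (A i * A j) x⟫ := by
    rw [← real_inner_self_eq_norm_sq, hg]
    rw [sum_inner]
    refine Finset.sum_congr rfl fun i _ => ?_
    rw [real_inner_smul_left, inner_sum, Finset.mul_sum]
    refine Finset.sum_congr rfl fun j _ => ?_
    rw [real_inner_smul_right, hmul i j]
    ring
  have hdouble : ‖g‖ ^ 2 + ‖g‖ ^ 2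
      = ∑ i : Fin (n + n), 2 * (c i ^ 2 * ‖x‖ ^ 2) := by
    have step1 : ‖g‖ ^ 2 + ‖g‖ ^ 2
        = ∑ i : Fin (n + n), ∑ j : Fin (n + n),
            (c i * c j * ⟪x, Matrix.toEuclideanLin (A i * A j) x⟫
              + c j * c i * ⟪x, Matrix.toEuclideanLin (A j * A i) x⟫) := by
      have e2 : ‖g‖ ^ 2 = ∑ i : Fin (n + n), ∑ j : Fin (n + n),
          c j * c i * ⟪x, Matrix.toEuclideanLin (A j * A i) x⟫ :=
        expand.trans Finset.sum_comm
      nth_rewrite 1 [expand]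
      nth_rewrite 1 [e2]
      rw [← Finset.sum_add_distrib]
      exact Finset.sum_congr rfl fun i _ => Finset.sum_add_distrib.symm
    rw [step1]
    refine Finset.sum_congr rfl fun i _ => ?_
    have step2 : ∀ j ∈ (Finset.univ : Finset (Fin (n + n))),
        c i * c j * ⟪x, Matrix.toEuclideanLin (A i * A j) x⟫
          + c j * c i * ⟪x, Matrix.toEuclideanLin (A j * A i) x⟫
        = if i = j then 2 * (c i ^ 2 * ‖x‖ ^ 2) else 0 := by
      intro j _
      have h := hpair i j
      by_cases hij : i = j
      · subst hij
        rw [if_pos rfl] at h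
        rw [if_pos rfl]
        simp only [hc]
        linear_combination (16 * quadForm (A i) x * quadForm (A i) x) * h
      · rw [if_neg hij] at h
        rw [if_neg hij]
        simp only [hc]
        linear_combination (16 * quadForm (A i) x * quadForm (A j) x) * h
    rw [Finset.sum_congr rfl step2]
    simp
  have hq : ∑ i : Fin (n + n), c i ^ 2 = 16 * cliffQ A x := by
    rw [cliffQ, Finset.mul_sum]
    refine Finset.sum_congr rfl fun i _ => ?_
    rw [hc]; ring
  rw [hgrad]
  have := hdouble
  rw [Finset.sum_congr rfl (fun i _ => by ring :
    ∀ i ∈ Finset.univ, 2 * (c i ^ 2 * ‖x‖ ^ 2) = 2 * ‖x‖ ^ 2 * c i ^ 2)] at this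
  rw [← Finset.mul_sum, hq] at this
  linarith
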